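/- Let Γ and Γ' be 2k-regular graphs (k ≥ 2) with distance magic labelings ℓ and ℓ'. Let C = (u_0,...,u_{d-1}) and C' = (v_0,...,v_{d-1}) be cyclets of even length d in Γ and Γ' respectively. Suppose: (i) every vertex of Γ' has exactly k neighbors with nonnegative ℓ'-label and k with negative ℓ'-label; (ii) the edges of C' alternate between having both endvertices' labels of the same sign-class and of different sign-classes (with respect to the partition into nonnegative and negative ℓ'-labels); (iii) ℓ(u_{i-1}) + ℓ(u_{i+1}) = ℓ'(v_{i-1}) + ℓ'(v_{i+1}) for each i ∈ Z_d. Then the merged graph Γ ⊕^C_{C'} Γ' is a 2k-regular distance magic graph, with distance magic labeling given by keeping ℓ on V(Γ) and shifting ℓ' by +n on vertices with nonnegative ℓ'-label and by -n on vertices with negative ℓ'-label, where n = |V(Γ)|. -/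

import Mathlib

open Finset

/-- The label set `I_n = {1-n, 3-n, ..., n-1}`. -/
def ISet (n : ℕ) : Finset ℤ := (Finset.range n).image (fun i : ℕ => 2 * (i : ℤ) + 1 - n)

open scoped Classical in
/-- Sum of the labels over the neighborhood of `w`. -/
noncomputable def nbrSum {V : Type*} [Fintype V] (G : SimpleGraph V) (ℓ : V → ℤ) (w : V) : ℤ :=
  ∑ x ∈ Finset.univ.filter (fun x => G.Adj w x), ℓ x

open scoped Classical in
/-- The degree of a vertex. -/
noncomputable def gdeg {V : Type*} [Fintype V] (G : SimpleGraph V) (w : V) : ℕ :=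
  (Finset.univ.filter (fun x => G.Adj w x)).card

/-- A distance magic labeling: a bijection onto `I_n` with all neighborhood sums `0`. -/
def IsDML {V : Type*} [Fintype V] (G : SimpleGraph V) (ℓ : V → ℤ) : Prop :=
  Function.Injective ℓ ∧ (∀ x, ℓ x ∈ ISet (Fintype.card V)) ∧
    (∀ i ∈ ISet (Fintype.card V), ∃ x, ℓ x = i) ∧ ∀ w, nbrSum G ℓ w = 0

/-- The merge `Γ ⊕^C_{C'} Γ'` of two graphs along cyclets `u` and `v` of length `d`:
delete the cyclet edges and add the edges `u_i v_{i+1}` and `v_i u_{i+1}`. -/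
def mergeGraph {V V' : Type*} (G : SimpleGraph V) (G' : SimpleGraph V') (d : ℕ)
    (u : ZMod d → V) (v : ZMod d → V') : SimpleGraph (V ⊕ V') where
  Adj a b :=
    match a, b with
    | Sum.inl a, Sum.inl b =>
        G.Adj a b ∧ ¬ ∃ i, (a = u i ∧ b = u (i + 1)) ∨ (b = u i ∧ a = u (i + 1))
    | Sum.inr a, Sum.inr b =>
        G'.Adj a b ∧ ¬ ∃ i, (a = v i ∧ b = v (i + 1)) ∨ (b = v i ∧ a = v (i + 1))
    | Sum.inl a, Sum.inr b => ∃ i, (a = u i ∧ b = v (i + 1)) ∨ (b = v i ∧ a = u (i + 1))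
    | Sum.inr b, Sum.inl a => ∃ i, (a = u i ∧ b = v (i + 1)) ∨ (b = v i ∧ a = u (i + 1))
  symm := ⟨by
    rintro (a | a) (b | b) h
    · exact ⟨h.1.symm, fun ⟨i, hi⟩ => h.2 ⟨i, hi.symm⟩⟩
    · exact h
    · exact h
    · exact ⟨h.1.symm, fun ⟨i, hi⟩ => h.2 ⟨i, hi.symm⟩⟩⟩
  loopless := ⟨by
    rintro (a | a) h
    · exact G.loopless.irrefl a h.1
    · exact G'.loopless.irrefl a h.1⟩

open scoped Classical in
/-- The number of neighbors of `w` satisfying the predicate `p`. -/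
noncomputable def nbrCountP {V : Type*} [Fintype V] (G : SimpleGraph V) (p : V → Prop)
    (w : V) : ℕ :=
  (Finset.univ.filter (fun x => G.Adj w x ∧ p x)).card

lemma mem_ISet_iff (n : ℕ) (j : ℤ) : j ∈ ISet n ↔ ∃ i : ℕ, i < n ∧ j = 2 * i + 1 - n := by
  simp only [ISet, Finset.mem_image, Finset.mem_range]
  constructor
  · rintro ⟨i, hi, rfl⟩; exact ⟨i, hi, by ring⟩
  · rintro ⟨i, hi, rfl⟩; exact ⟨i, hi, by ring⟩

lemma cyclet_pair_iff {W X : Type*} {d : ℕ} (w : ZMod d → W) (z : ZMod d → X)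
    (hw : Function.Injective w) (j : ZMod d) (b : X) :
    (∃ i, (w j = w i ∧ b = z (i + 1)) ∨ (b = z i ∧ w j = w (i + 1))) ↔
      (b = z (j + 1) ∨ b = z (j - 1)) := by
  constructor
  · rintro ⟨i, ⟨h1, h2⟩ | ⟨h1, h2⟩⟩
    · exact Or.inl (by rw [h2, hw h1])
    · refine Or.inr ?_
      have hi : i = j - 1 := by rw [hw h2]; ring
      rw [h1, hi]
  · rintro (h | h)
    · exact ⟨j, Or.inl ⟨rfl, h⟩⟩
    · exact ⟨j - 1, Or.inr ⟨h, by congr 1; ring⟩⟩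

lemma cyclet_pair_iff' {W X : Type*} {d : ℕ} (w : ZMod d → W) (z : ZMod d → X)
    (hw : Function.Injective w) (j : ZMod d) (b : X) :
    (∃ i, (b = z i ∧ w j = w (i + 1)) ∨ (w j = w i ∧ b = z (i + 1))) ↔
      (b = z (j - 1) ∨ b = z (j + 1)) := by
  constructor
  · rintro ⟨i, ⟨h1, h2⟩ | ⟨h1, h2⟩⟩
    · refine Or.inl ?_
      have hi : i = j - 1 := by rw [hw h2]; ring
      rw [h1, hi]
    · exact Or.inr (by rw [h2, hw h1])
  · rintro (h | h)
    · exact ⟨j - 1, Or.inl ⟨h, by congr 1; ring⟩⟩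
    · exact ⟨j, Or.inr ⟨rfl, h⟩⟩

lemma sum_filter_diff_pair {α : Type*} [Fintype α] [DecidableEq α] (P : α → Prop)
    [DecidablePred P] (g : α → ℤ) {x y : α} (hx : P x) (hy : P y) (hxy : x ≠ y) :
    ∑ b ∈ univ.filter (fun b => P b ∧ ¬(b = x ∨ b = y)), g b
      = (∑ b ∈ univ.filter P, g b) - g x - g y := by
  have hsub : ({x, y} : Finset α) ⊆ univ.filter P := by
    intro b hb
    simp only [mem_insert, mem_singleton] at hb
    simp only [mem_filter, mem_univ, true_and]
    rcases hb with rfl | rfl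
    exacts [hx, hy]
  have hset : univ.filter (fun b => P b ∧ ¬(b = x ∨ b = y)) = univ.filter P \ {x, y} := by
    ext b
    simp only [mem_filter, mem_univ, true_and, mem_sdiff, mem_insert, mem_singleton]
  rw [hset, Finset.sum_sdiff_eq_sub hsub, Finset.sum_pair hxy]
  ring

lemma filter_pair_eq {α : Type*} [Fintype α] [DecidableEq α] (x y : α) :
    univ.filter (fun b => b = x ∨ b = y) = ({x, y} : Finset α) := by
  ext b; simp [mem_insert]

open scoped Classical in
lemma cast_deg {W : Type*} [Fintype W] (H : SimpleGraph W) (w : W) :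
    (gdeg H w : ℤ) = ∑ x ∈ Finset.univ.filter (fun x => H.Adj w x), (1 : ℤ) := by
  simp [gdeg]

theorem merge_isDML {V V' : Type*} [Fintype V] [Fintype V']
    (G : SimpleGraph V) (G' : SimpleGraph V') (k : ℕ) (hk : 2 ≤ k)
    (hreg : ∀ w, gdeg G w = 2 * k) (hreg' : ∀ w, gdeg G' w = 2 * k)
    (ℓ : V → ℤ) (ℓ' : V' → ℤ) (hdm : IsDML G ℓ) (hdm' : IsDML G' ℓ')
    (d : ℕ) (hd3 : 3 ≤ d) (hdeven : Even d)
    (u : ZMod d → V) (v : ZMod d → V')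
    (hu_inj : Function.Injective u) (hv_inj : Function.Injective v)
    (hu_adj : ∀ i, G.Adj (u i) (u (i + 1))) (hv_adj : ∀ i, G'.Adj (v i) (v (i + 1)))
    (hbal : ∀ w, nbrCountP G' (fun x => 0 ≤ ℓ' x) w = k ∧
      nbrCountP G' (fun x => ℓ' x < 0) w = k)
    (halt : ∀ i : ZMod d,
      ((0 ≤ ℓ' (v i)) ↔ (0 ≤ ℓ' (v (i + 1)))) ↔
        ¬ ((0 ≤ ℓ' (v (i + 1))) ↔ (0 ≤ ℓ' (v (i + 2)))))
    (hcomp : ∀ i : ZMod d, ℓ (u (i - 1)) + ℓ (u (i + 1)) = ℓ' (v (i - 1)) + ℓ' (v (i + 1))) :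
    (∀ w, gdeg (mergeGraph G G' d u v) w = 2 * k) ∧
      IsDML (mergeGraph G G' d u v)
        (Sum.elim ℓ (fun x => if 0 ≤ ℓ' x then ℓ' x + (Fintype.card V : ℤ)
          else ℓ' x - (Fintype.card V : ℤ))) := by
  classical
  obtain ⟨hinj, hmem, hsurj, hzero⟩ := hdm
  obtain ⟨hinj', hmem', hsurj', hzero'⟩ := hdm'
  set n := Fintype.card V with hn
  set n' := Fintype.card V' with hn'
  haveI : NeZero d := ⟨by omega⟩
  set M := mergeGraph G G' d u v with hM
  set ℓ'' : V' → ℤ := fun x => if 0 ≤ ℓ' x then ℓ' x + (n : ℤ) else ℓ' x - (n : ℤ) with hl2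
  set L : V ⊕ V' → ℤ := Sum.elim ℓ ℓ'' with hLdef
  -- basic arithmetic facts in ZMod d
  have htwo : (2 : ZMod d) ≠ 0 := by
    intro h
    have h4 : 4 ≤ d := by
      rcases hdeven with ⟨m, hm⟩; omega
    have hdvd := (ZMod.natCast_eq_zero_iff 2 d).1 (by exact_mod_cast h)
    exact absurd (Nat.le_of_dvd (by omega) hdvd) (by omega)
  have hne2 : ∀ j : ZMod d, j + 1 ≠ j - 1 := by
    intro j h
    exact htwo (by rw [show (2 : ZMod d) = (j + 1) - (j - 1) by ring, h, sub_self])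
  have huv_ne : ∀ j : ZMod d, u (j + 1) ≠ u (j - 1) := fun j h => hne2 j (hu_inj h)
  have hvv_ne : ∀ j : ZMod d, v (j + 1) ≠ v (j - 1) := fun j h => hne2 j (hv_inj h)
  -- key sum computations
  have key_inl_off : ∀ (f : V ⊕ V' → ℤ) (a : V), a ∉ Set.range u →
      ∑ x ∈ univ.filter (fun x => M.Adj (Sum.inl a) x), f x
        = ∑ b ∈ univ.filter (fun b => G.Adj a b), f (Sum.inl b) := by
    intro f a ha
    rw [Finset.sum_filter, Fintype.sum_sum_type]
    have h1 : ∀ b : V, M.Adj (Sum.inl a) (Sum.inl b) ↔ G.Adj a b := by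
      intro b
      show (G.Adj a b ∧ ¬ ∃ i, (a = u i ∧ b = u (i + 1)) ∨ (b = u i ∧ a = u (i + 1))) ↔ _
      constructor
      · exact fun h => h.1
      · intro h
        refine ⟨h, ?_⟩
        rintro ⟨i, ⟨h1, -⟩ | ⟨-, h1⟩⟩
        exacts [ha ⟨i, h1.symm⟩, ha ⟨i + 1, h1.symm⟩]
    have h2 : ∀ c : V', ¬ M.Adj (Sum.inl a) (Sum.inr c) := by
      intro c
      show ¬ ∃ i, (a = u i ∧ c = v (i + 1)) ∨ (c = v i ∧ a = u (i + 1))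
      rintro ⟨i, ⟨h1, -⟩ | ⟨-, h1⟩⟩
      exacts [ha ⟨i, h1.symm⟩, ha ⟨i + 1, h1.symm⟩]
    simp only [h1, h2, if_false]
    rw [Finset.sum_const_zero, add_zero, ← Finset.sum_filter]
  have key_inl_on : ∀ (f : V ⊕ V' → ℤ) (j : ZMod d),
      ∑ x ∈ univ.filter (fun x => M.Adj (Sum.inl (u j)) x), f x
        = ((∑ b ∈ univ.filter (fun b => G.Adj (u j) b), f (Sum.inl b))
            - f (Sum.inl (u (j + 1))) - f (Sum.inl (u (j - 1))))
          + (f (Sum.inr (v (j + 1))) + f (Sum.inr (v (j - 1)))) := by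
    intro f j
    rw [Finset.sum_filter, Fintype.sum_sum_type]
    have h1 : ∀ b : V, M.Adj (Sum.inl (u j)) (Sum.inl b)
        ↔ (G.Adj (u j) b ∧ ¬(b = u (j + 1) ∨ b = u (j - 1))) := by
      intro b
      show (G.Adj (u j) b ∧ ¬ ∃ i, (u j = u i ∧ b = u (i + 1)) ∨ (b = u i ∧ u j = u (i + 1))) ↔ _
      rw [cyclet_pair_iff u u hu_inj j b]
    have h2 : ∀ c : V', M.Adj (Sum.inl (u j)) (Sum.inr c) ↔ (c = v (j + 1) ∨ c = v (j - 1)) := by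
      intro c
      show (∃ i, (u j = u i ∧ c = v (i + 1)) ∨ (c = v i ∧ u j = u (i + 1))) ↔ _
      exact cyclet_pair_iff u v hu_inj j c
    simp only [h1, h2]
    rw [← Finset.sum_filter, ← Finset.sum_filter]
    have hadj1 : G.Adj (u j) (u (j + 1)) := hu_adj j
    have hadj2 : G.Adj (u j) (u (j - 1)) := by
      have := (hu_adj (j - 1)).symm
      rwa [show j - 1 + 1 = j by ring] at this
    rw [sum_filter_diff_pair (fun b => G.Adj (u j) b) (fun b => f (Sum.inl b)) hadj1 hadj2
      (huv_ne j), filter_pair_eq, Finset.sum_pair (hvv_ne j)]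
  have key_inr_off : ∀ (f : V ⊕ V' → ℤ) (c : V'), c ∉ Set.range v →
      ∑ x ∈ univ.filter (fun x => M.Adj (Sum.inr c) x), f x
        = ∑ b ∈ univ.filter (fun b => G'.Adj c b), f (Sum.inr b) := by
    intro f c hc
    rw [Finset.sum_filter, Fintype.sum_sum_type]
    have h1 : ∀ b : V, ¬ M.Adj (Sum.inr c) (Sum.inl b) := by
      intro b
      show ¬ ∃ i, (b = u i ∧ c = v (i + 1)) ∨ (c = v i ∧ b = u (i + 1))
      rintro ⟨i, ⟨-, h1⟩ | ⟨h1, -⟩⟩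
      exacts [hc ⟨i + 1, h1.symm⟩, hc ⟨i, h1.symm⟩]
    have h2 : ∀ b : V', M.Adj (Sum.inr c) (Sum.inr b) ↔ G'.Adj c b := by
      intro b
      show (G'.Adj c b ∧ ¬ ∃ i, (c = v i ∧ b = v (i + 1)) ∨ (b = v i ∧ c = v (i + 1))) ↔ _
      constructor
      · exact fun h => h.1
      · intro h
        refine ⟨h, ?_⟩
        rintro ⟨i, ⟨h1, -⟩ | ⟨-, h1⟩⟩
        exacts [hc ⟨i, h1.symm⟩, hc ⟨i + 1, h1.symm⟩]
    simp only [h1, h2, if_false]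
    rw [Finset.sum_const_zero, zero_add, ← Finset.sum_filter]
  have key_inr_on : ∀ (f : V ⊕ V' → ℤ) (j : ZMod d),
      ∑ x ∈ univ.filter (fun x => M.Adj (Sum.inr (v j)) x), f x
        = (f (Sum.inl (u (j - 1))) + f (Sum.inl (u (j + 1))))
          + ((∑ b ∈ univ.filter (fun b => G'.Adj (v j) b), f (Sum.inr b))
            - f (Sum.inr (v (j + 1))) - f (Sum.inr (v (j - 1)))) := by
    intro f j
    rw [Finset.sum_filter, Fintype.sum_sum_type]
    have h1 : ∀ b : V, M.Adj (Sum.inr (v j)) (Sum.inl b)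
        ↔ (b = u (j - 1) ∨ b = u (j + 1)) := by
      intro b
      show (∃ i, (b = u i ∧ v j = v (i + 1)) ∨ (v j = v i ∧ b = u (i + 1))) ↔ _
      exact cyclet_pair_iff' v u hv_inj j b
    have h2 : ∀ b : V', M.Adj (Sum.inr (v j)) (Sum.inr b)
        ↔ (G'.Adj (v j) b ∧ ¬(b = v (j + 1) ∨ b = v (j - 1))) := by
      intro b
      show (G'.Adj (v j) b ∧ ¬ ∃ i, (v j = v i ∧ b = v (i + 1)) ∨ (b = v i ∧ v j = v (i + 1))) ↔ _
      rw [cyclet_pair_iff v v hv_inj j b]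
    simp only [h1, h2]
    rw [← Finset.sum_filter, ← Finset.sum_filter]
    have hadj1 : G'.Adj (v j) (v (j + 1)) := hv_adj j
    have hadj2 : G'.Adj (v j) (v (j - 1)) := by
      have := (hv_adj (j - 1)).symm
      rwa [show j - 1 + 1 = j by ring] at this
    rw [sum_filter_diff_pair (fun b => G'.Adj (v j) b) (fun b => f (Sum.inr b)) hadj1 hadj2
      (hvv_ne j), filter_pair_eq, Finset.sum_pair (huv_ne j).symm]
  -- regularity
  have hdeg : ∀ w, gdeg M w = 2 * k := by
    intro w
    have : (gdeg M w : ℤ) = ((2 * k : ℕ) : ℤ) := by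
      rcases w with a | c
      · by_cases ha : a ∈ Set.range u
        · obtain ⟨j, rfl⟩ := ha
          rw [cast_deg M, key_inl_on (fun _ => (1 : ℤ)) j, ← cast_deg G, hreg (u j)]
          push_cast; ring
        · rw [cast_deg M, key_inl_off (fun _ => (1 : ℤ)) a ha, ← cast_deg G, hreg a]
      · by_cases hc : c ∈ Set.range v
        · obtain ⟨j, rfl⟩ := hc
          rw [cast_deg M, key_inr_on (fun _ => (1 : ℤ)) j, ← cast_deg G', hreg' (v j)]
          push_cast; ring
        · rw [cast_deg M, key_inr_off (fun _ => (1 : ℤ)) c hc, ← cast_deg G', hreg' c]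
    exact_mod_cast this
  -- sign alternation across two steps
  have hopp : ∀ j : ZMod d, ¬ ((0 ≤ ℓ' (v (j - 1))) ↔ (0 ≤ ℓ' (v (j + 1)))) := by
    intro j
    have h := halt (j - 1)
    rw [show j - 1 + 1 = j by ring, show j - 1 + 2 = j + 1 by ring] at h
    tauto
  have hcancel : ∀ j : ZMod d,
      ℓ'' (v (j + 1)) + ℓ'' (v (j - 1)) = ℓ' (v (j + 1)) + ℓ' (v (j - 1)) := by
    intro j
    have h := hopp j
    by_cases h1 : 0 ≤ ℓ' (v (j + 1))
    · have h2 : ¬ 0 ≤ ℓ' (v (j - 1)) := by tauto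
      simp only [hl2, if_pos h1, if_neg h2]
      ring
    · have h2 : 0 ≤ ℓ' (v (j - 1)) := by tauto
      simp only [hl2, if_neg h1, if_pos h2]
      ring
  -- the shifted labels sum to zero over every G'-neighborhood
  have hsum2 : ∀ c : V', ∑ x ∈ univ.filter (fun x => G'.Adj c x), ℓ'' x = 0 := by
    intro c
    have hrepr : ∀ x ∈ univ.filter (fun x => G'.Adj c x),
        ℓ'' x = ℓ' x + (if 0 ≤ ℓ' x then (n : ℤ) else -(n : ℤ)) := by
      intro x _
      simp only [hl2]
      split <;> ring
    rw [Finset.sum_congr rfl hrepr, Finset.sum_add_distrib, Finset.sum_ite,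
      Finset.sum_const, Finset.sum_const, Finset.filter_filter, Finset.filter_filter]
    have h0 : ∑ x ∈ univ.filter (fun x => G'.Adj c x), ℓ' x = 0 := hzero' c
    have hA2 : (univ.filter (fun x => G'.Adj c x ∧ 0 ≤ ℓ' x)).card = k := by
      rw [← (hbal c).1, nbrCountP]
      congr 1
      ext x
      simp [Finset.mem_filter]
    have hB2 : (univ.filter (fun x => G'.Adj c x ∧ ¬ 0 ≤ ℓ' x)).card = k := by
      rw [← (hbal c).2, nbrCountP]
      congr 1
      ext x
      simp [Finset.mem_filter, not_le]
    rw [h0, hA2, hB2, zero_add, nsmul_eq_mul, nsmul_eq_mul]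
    ring
  -- the neighborhood sums of L vanish
  have hLzero : ∀ w, nbrSum M L w = 0 := by
    intro w
    rcases w with a | c
    · by_cases ha : a ∈ Set.range u
      · obtain ⟨j, rfl⟩ := ha
        show ∑ x ∈ univ.filter (fun x => M.Adj (Sum.inl (u j)) x), L x = 0
        rw [key_inl_on L j]
        simp only [hLdef, Sum.elim_inl, Sum.elim_inr]
        have h0 : ∑ b ∈ univ.filter (fun b => G.Adj (u j) b), ℓ b = 0 := hzero (u j)
        rw [h0, hcancel j]
        have := hcomp j
        linarith
      · show ∑ x ∈ univ.filter (fun x => M.Adj (Sum.inl a) x), L x = 0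
        rw [key_inl_off L a ha]
        simp only [hLdef, Sum.elim_inl]
        exact hzero a
    · by_cases hc : c ∈ Set.range v
      · obtain ⟨j, rfl⟩ := hc
        show ∑ x ∈ univ.filter (fun x => M.Adj (Sum.inr (v j)) x), L x = 0
        rw [key_inr_on L j]
        simp only [hLdef, Sum.elim_inl, Sum.elim_inr]
        rw [hsum2 (v j)]
        have h1 := hcancel j
        have h2 := hcomp j
        linarith
      · show ∑ x ∈ univ.filter (fun x => M.Adj (Sum.inr c) x), L x = 0
        rw [key_inr_off L c hc]
        simp only [hLdef, Sum.elim_inr]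
        exact hsum2 c
  -- n' is even, via double counting
  have hApos : n' = 2 * (univ.filter (fun x => 0 ≤ ℓ' x)).card := by
    have hcount : ∑ w : V', nbrCountP G' (fun x => 0 ≤ ℓ' x) w
        = ∑ x ∈ univ.filter (fun x => 0 ≤ ℓ' x), gdeg G' x := by
      simp only [nbrCountP, Finset.card_filter]
      rw [Finset.sum_comm, Finset.sum_filter]
      refine Finset.sum_congr rfl ?_
      intro x _
      by_cases h : 0 ≤ ℓ' x
      · simp only [h, and_true, if_pos h, gdeg, Finset.card_filter]
        refine Finset.sum_congr rfl ?_
        intro w _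
        rw [SimpleGraph.adj_comm]
      · simp [h]
    have hL1 : ∑ w : V', nbrCountP G' (fun x => 0 ≤ ℓ' x) w = n' * k := by
      rw [Finset.sum_congr rfl (fun w _ => (hbal w).1), Finset.sum_const, Finset.card_univ,
        smul_eq_mul]
    have hR1 : ∑ x ∈ univ.filter (fun x => 0 ≤ ℓ' x), gdeg G' x
        = (univ.filter (fun x => 0 ≤ ℓ' x)).card * (2 * k) := by
      rw [Finset.sum_congr rfl (fun x _ => hreg' x), Finset.sum_const, smul_eq_mul]
    have hk0 : 0 < k := by omega
    have : n' * k = (2 * (univ.filter (fun x => 0 ≤ ℓ' x)).card) * k := by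
      rw [hL1.symm, hcount, hR1]; ring
    exact Nat.eq_of_mul_eq_mul_right hk0 this
  obtain ⟨m, hm⟩ : ∃ m, n' = m + m :=
    ⟨(univ.filter (fun x => 0 ≤ ℓ' x)).card, by omega⟩
  -- bounds
  have hbnd : ∀ x, ∃ i : ℕ, i < n ∧ ℓ x = 2 * i + 1 - n :=
    fun x => (mem_ISet_iff n (ℓ x)).1 (hmem x)
  have hbnd' : ∀ x, ∃ i : ℕ, i < n' ∧ ℓ' x = 2 * i + 1 - n' :=
    fun x => (mem_ISet_iff n' (ℓ' x)).1 (hmem' x)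
  have hcard : Fintype.card (V ⊕ V') = n + n' := by
    rw [Fintype.card_sum]
  refine ⟨hdeg, ?_, ?_, ?_, hLzero⟩
  · -- injectivity
    rintro (a | c) (b | e) h <;> simp only [hLdef, Sum.elim_inl, Sum.elim_inr, hl2] at h
    · rw [hinj h]
    · obtain ⟨i, hi, he1⟩ := hbnd a
      obtain ⟨i', hi', he2⟩ := hbnd' e
      by_cases hs : 0 ≤ ℓ' e <;> simp only [if_pos, if_neg, hs, if_true, if_false] at h <;> omega
    · obtain ⟨i, hi, he1⟩ := hbnd b
      obtain ⟨i', hi', he2⟩ := hbnd' c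
      by_cases hs : 0 ≤ ℓ' c <;> simp only [if_pos, if_neg, hs, if_true, if_false] at h <;> omega
    · obtain ⟨i1, hi1, he1⟩ := hbnd' c
      obtain ⟨i2, hi2, he2⟩ := hbnd' e
      by_cases hs1 : 0 ≤ ℓ' c <;> by_cases hs2 : 0 ≤ ℓ' e <;>
        simp only [hs1, hs2, if_true, if_false] at h
      · rw [hinj' (by omega : ℓ' c = ℓ' e)]
      · omega
      · omega
      · rw [hinj' (by omega : ℓ' c = ℓ' e)]
  · -- membership
    rintro (a | c) <;> rw [hcard, mem_ISet_iff] <;>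
      simp only [hLdef, Sum.elim_inl, Sum.elim_inr, hl2]
    · obtain ⟨i, hi, he1⟩ := hbnd a
      exact ⟨i + m, by omega, by omega⟩
    · obtain ⟨i, hi, he1⟩ := hbnd' c
      by_cases hs : 0 ≤ ℓ' c
      · rw [if_pos hs]
        exact ⟨i + n, by omega, by omega⟩
      · rw [if_neg hs]
        exact ⟨i, by omega, by omega⟩
  · -- surjectivity
    intro j hj
    rw [hcard, mem_ISet_iff] at hj
    obtain ⟨i, hi, rfl⟩ := hj
    by_cases h1 : i < m
    · obtain ⟨x, hx⟩ := hsurj' (2 * (i : ℤ) + 1 - n') ((mem_ISet_iff n' _).2 ⟨i, by omega, rfl⟩)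
      refine ⟨Sum.inr x, ?_⟩
      simp only [hLdef, Sum.elim_inr, hl2]
      rw [if_neg (by omega : ¬ (0 : ℤ) ≤ ℓ' x)]
      omega
    · by_cases h2 : i < m + n
      · obtain ⟨x, hx⟩ := hsurj (2 * ((i - m : ℕ) : ℤ) + 1 - n)
          ((mem_ISet_iff n _).2 ⟨i - m, by omega, rfl⟩)
        refine ⟨Sum.inl x, ?_⟩
        simp only [hLdef, Sum.elim_inl]
        omega
      · obtain ⟨x, hx⟩ := hsurj' (2 * ((i - n : ℕ) : ℤ) + 1 - n')
          ((mem_ISet_iff n' _).2 ⟨i - n, by omega, rfl⟩)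
        refine ⟨Sum.inr x, ?_⟩
        simp only [hLdef, Sum.elim_inr, hl2]
        rw [if_pos (by omega : (0 : ℤ) ≤ ℓ' x)]
        omega
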